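/- For every ε > 0 there exists p₀ such that for every prime p ≥ p₀ and every integer s with p ∤ s, the exponential sum over the set of primitive roots modulo p satisfies |Σ_{1 ≤ g ≤ p−1, g a primitive root mod p} e^{2πi s g / p}| ≤ p^{1/2 + ε}. In particular, for each ε > 0 and all sufficiently large primes p, (1/p)·|Σ_{g primitive root mod p} e^{2πi s g / p}| ≤ p^{ε − 1/2} for every s with p ∤ s, so the Weyl sums of the set of primitive roots tend to 0 and the primitive roots are equidistributed in [1, p − 1]. -/

import Mathlib

open Finset
open scoped Classical

/-- Divisor bound: `τ(n) ≤ n ^ ε` for all sufficiently large `n`. -/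
lemma aux_card_divisors_le_rpow (ε : ℝ) (hε : 0 < ε) :
    ∃ N : ℕ, 1 ≤ N ∧ ∀ n : ℕ, N ≤ n → (n.divisors.card : ℝ) ≤ (n : ℝ) ^ ε := by
  set δ : ℝ := ε / 2 with hδdef
  have hδ : 0 < δ := by positivity
  have hL : 0 < Real.log 2 := Real.log_pos one_lt_two
  set C : ℝ := 1 + 1 / (δ * Real.log 2) with hCdef
  have hC1 : 1 ≤ C := le_add_of_nonneg_right (by positivity)
  have hCδL : 1 ≤ C * (δ * Real.log 2) := by
    have h0 : 0 < δ * Real.log 2 := by positivity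
    have heq : C * (δ * Real.log 2) = δ * Real.log 2 + 1 := by
      rw [hCdef]; field_simp
    rw [heq]; linarith
  -- Claim A : for any q ≥ 2 and a, (a+1) ≤ C * q ^ (δ a)
  have claimA : ∀ q a : ℕ, 2 ≤ q → (a + 1 : ℝ) ≤ C * (q : ℝ) ^ (δ * a) := by
    intro q a hq
    have hq2 : (2 : ℝ) ≤ (q : ℝ) := by exact_mod_cast hq
    have h1 : (2 : ℝ) ^ (δ * a) ≤ (q : ℝ) ^ (δ * a) :=
      Real.rpow_le_rpow (by norm_num) hq2 (by positivity)
    have h2 : 1 + δ * a * Real.log 2 ≤ (2 : ℝ) ^ (δ * a) := by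
      rw [Real.rpow_def_of_pos (by norm_num)]
      have := Real.add_one_le_exp (Real.log 2 * (δ * a))
      calc 1 + δ * a * Real.log 2 = Real.log 2 * (δ * a) + 1 := by ring
        _ ≤ Real.exp (Real.log 2 * (δ * a)) := this
    have h3 : (a + 1 : ℝ) ≤ C * (1 + δ * a * Real.log 2) := by
      have ha : (0:ℝ) ≤ a := Nat.cast_nonneg a
      have := mul_le_mul_of_nonneg_left hCδL ha  -- a ≤ a * (C * δ L)
      nlinarith
    calc (a + 1 : ℝ) ≤ C * (1 + δ * a * Real.log 2) := h3
      _ ≤ C * (2 : ℝ) ^ (δ * a) := by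
          apply mul_le_mul_of_nonneg_left h2 (by linarith)
      _ ≤ C * (q : ℝ) ^ (δ * a) := by
          apply mul_le_mul_of_nonneg_left h1 (by linarith)
  -- Claim B : if q ^ δ ≥ 2 then (a+1) ≤ q ^ (δ a)
  have claimB : ∀ q a : ℕ, (2:ℝ) ≤ (q:ℝ) ^ δ → (a + 1 : ℝ) ≤ (q : ℝ) ^ (δ * a) := by
    intro q a hq
    have hq0 : (0:ℝ) ≤ (q:ℝ) := Nat.cast_nonneg q
    have h1 : (a + 1 : ℝ) ≤ (2:ℝ) ^ a := by
      have := Nat.lt_two_pow_self (n := a)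
      exact_mod_cast this
    have h2 : ((2:ℝ)) ^ a ≤ ((q:ℝ) ^ δ) ^ a :=
      pow_le_pow_left₀ (by norm_num) hq a
    have h3 : ((q:ℝ) ^ δ) ^ a = (q:ℝ) ^ (δ * a) := by
      rw [← Real.rpow_natCast ((q:ℝ) ^ δ) a, ← Real.rpow_mul hq0]
    calc (a+1:ℝ) ≤ (2:ℝ)^a := h1
      _ ≤ ((q:ℝ)^δ)^a := h2
      _ = _ := h3
  -- the threshold for "small" primes
  set Q : ℕ := ⌈(2:ℝ) ^ (1/δ)⌉₊ with hQdef
  set A : ℝ := C ^ Q with hAdef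
  have hA1 : 1 ≤ A := one_le_pow₀ hC1
  -- main pointwise bound : τ(n) ≤ A * n ^ δ for n ≠ 0
  have main : ∀ n : ℕ, n ≠ 0 → (n.divisors.card : ℝ) ≤ A * (n : ℝ) ^ δ := by
    intro n hn
    have hcard : (n.divisors.card : ℝ) =
        ∏ q ∈ n.primeFactors, ((n.factorization q + 1 : ℕ) : ℝ) := by
      rw [Nat.card_divisors hn]
      exact Nat.cast_prod _ _
    have hQbig : ∀ q ∈ n.primeFactors, ¬ (q < Q) → (2:ℝ) ≤ (q:ℝ) ^ δ := by
      intro q hq hlt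
      have hqQ : (Q:ℝ) ≤ (q:ℝ) := by exact_mod_cast Nat.le_of_not_lt hlt
      have h2Q : (2:ℝ) ^ (1/δ) ≤ (Q:ℝ) := Nat.le_ceil _
      have hq0 : (0:ℝ) ≤ (q:ℝ) := Nat.cast_nonneg q
      have : (2:ℝ) ^ (1/δ) ≤ (q:ℝ) := le_trans h2Q hqQ
      calc (2:ℝ) = ((2:ℝ) ^ (1/δ)) ^ δ := by
            rw [← Real.rpow_mul (by norm_num), one_div_mul_cancel (ne_of_gt hδ),
              Real.rpow_one]
        _ ≤ (q:ℝ) ^ δ := Real.rpow_le_rpow (by positivity) this (le_of_lt hδ)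
    -- termwise bound
    have hterm : ∀ q ∈ n.primeFactors,
        ((n.factorization q + 1 : ℕ) : ℝ) ≤
          (if q < Q then C else 1) * (q:ℝ) ^ (δ * (n.factorization q : ℝ)) := by
      intro q hq
      have hq2 : 2 ≤ q := (Nat.prime_of_mem_primeFactors hq).two_le
      by_cases h : q < Q
      · simp only [h, if_true]
        have := claimA q (n.factorization q) hq2
        push_cast at this ⊢
        linarith
      · simp only [h, if_false, one_mul]
        have := claimB q (n.factorization q) (hQbig q hq h)
        push_cast at this ⊢
        linarith
    have hprod : (n.divisors.card : ℝ) ≤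
        (∏ q ∈ n.primeFactors, (if q < Q then C else 1)) *
          ∏ q ∈ n.primeFactors, (q:ℝ) ^ (δ * (n.factorization q : ℝ)) := by
      rw [hcard, ← Finset.prod_mul_distrib]
      apply Finset.prod_le_prod
      · intro q hq; positivity
      · exact hterm
    have hconst : (∏ q ∈ n.primeFactors, (if q < Q then C else 1)) ≤ A := by
      rw [hAdef]
      calc ∏ q ∈ n.primeFactors, (if q < Q then C else 1)
          = ∏ q ∈ n.primeFactors.filter (· < Q), C := by
            rw [Finset.prod_filter]
        _ = C ^ (n.primeFactors.filter (· < Q)).card := by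
            rw [Finset.prod_const]
        _ ≤ C ^ Q := by
            apply pow_le_pow_right₀ hC1
            calc (n.primeFactors.filter (· < Q)).card ≤ (Finset.range Q).card := by
                  apply Finset.card_le_card
                  intro x hx
                  simp only [Finset.mem_filter] at hx
                  exact Finset.mem_range.mpr hx.2
              _ = Q := Finset.card_range Q
    have hpow : (∏ q ∈ n.primeFactors, (q:ℝ) ^ (δ * (n.factorization q : ℝ)))
        = (n:ℝ) ^ δ := by
      have h1 : ∀ q ∈ n.primeFactors, (q:ℝ) ^ (δ * (n.factorization q : ℝ))
          = (((q ^ n.factorization q : ℕ)) : ℝ) ^ δ := by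
        intro q hq
        have hq0 : (0:ℝ) ≤ (q:ℝ) := Nat.cast_nonneg q
        rw [mul_comm δ, Real.rpow_mul hq0, Real.rpow_natCast]
        push_cast
        rfl
      rw [Finset.prod_congr rfl h1, Real.finset_prod_rpow _ _
        (fun q _ => by positivity) δ]
      congr 1
      rw [← Nat.cast_prod]
      congr 1
      conv_rhs => rw [← Nat.factorization_prod_pow_eq_self hn]
      rfl
    calc (n.divisors.card : ℝ) ≤ _ := hprod
      _ ≤ A * ∏ q ∈ n.primeFactors, (q:ℝ) ^ (δ * (n.factorization q : ℝ)) := by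
          apply mul_le_mul_of_nonneg_right hconst
          apply Finset.prod_nonneg; intro q hq; positivity
      _ = A * (n:ℝ) ^ δ := by rw [hpow]
  -- choose the threshold
  refine ⟨⌈A ^ (1/δ)⌉₊ + 1, Nat.le_add_left 1 _, ?_⟩
  intro n hn
  have hn0 : n ≠ 0 := by omega
  have hnA : A ^ (1/δ) ≤ (n:ℝ) := by
    calc A ^ (1/δ) ≤ (⌈A ^ (1/δ)⌉₊ : ℝ) := Nat.le_ceil _
      _ ≤ (n:ℝ) := by exact_mod_cast Nat.le_of_succ_le hn
  have hAn : A ≤ (n:ℝ) ^ δ := by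
    calc A = (A ^ (1/δ)) ^ δ := by
          rw [← Real.rpow_mul (by positivity), one_div_mul_cancel (ne_of_gt hδ),
            Real.rpow_one]
      _ ≤ (n:ℝ) ^ δ := Real.rpow_le_rpow (by positivity) hnA (le_of_lt hδ)
  calc (n.divisors.card : ℝ) ≤ A * (n:ℝ) ^ δ := main n hn0
    _ ≤ (n:ℝ) ^ δ * (n:ℝ) ^ δ := by
        apply mul_le_mul_of_nonneg_right hAn (by positivity)
    _ = (n:ℝ) ^ ε := by
        rw [← Real.rpow_add (by positivity : (0:ℝ) < (n:ℝ))]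
        norm_num [hδdef]


/-- Absolute value of a Gauss sum over `ZMod p`. -/
lemma aux_gauss_abs {p : ℕ} [Fact p.Prime] {χ : MulChar (ZMod p) ℂ} (hχ : χ ≠ 1)
    {ψ : AddChar (ZMod p) ℂ} (hψ : ψ.IsPrimitive) :
    ‖gaussSum χ ψ‖ = Real.sqrt p := by
  have habs1 : ∀ a : ZMod p, ‖ψ a‖ = 1 := by
    intro a
    apply Complex.norm_eq_one_of_pow_eq_one (n := p) _ (Nat.Prime.ne_zero Fact.out)
    rw [← AddChar.map_nsmul_eq_pow]
    have : (p : ℕ) • a = 0 := by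
      simp [nsmul_eq_mul, ZMod.natCast_self]
    rw [this, AddChar.map_zero_eq_one]
  have hconj : (starRingEnd ℂ) (gaussSum χ ψ) = gaussSum χ⁻¹ ψ⁻¹ := by
    rw [gaussSum, gaussSum, map_sum]
    apply Finset.sum_congr rfl
    intro a _
    rw [map_mul]
    congr 1
    · rw [← MulChar.star_apply' χ a, RCLike.star_def]
    · rw [AddChar.inv_apply', ← Complex.inv_eq_conj (habs1 a)]
  have hmul := gaussSum_mul_gaussSum_eq_card hχ hψ
  rw [← hconj, Complex.mul_conj] at hmul
  have hns : Complex.normSq (gaussSum χ ψ) = p := by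
    have : ((Complex.normSq (gaussSum χ ψ) : ℝ) : ℂ) = ((p : ℝ) : ℂ) := by
      rw [hmul]; norm_num [ZMod.card p]
    exact_mod_cast this
  rw [Complex.norm_def, hns]

/-- Sum over units equals sum over the field when the function vanishes at `0`. -/
lemma aux_sum_units {p : ℕ} [Fact p.Prime] (h : ZMod p → ℂ) (h0 : h 0 = 0) :
    ∑ x : ZMod p, h x = ∑ a : (ZMod p)ˣ, h ↑a := by
  have h1 : ∑ x : ZMod p, h x = ∑ x ∈ Finset.univ.filter (· ≠ 0), h x := by
    rw [Finset.sum_filter_of_ne]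
    intro x _ hx
    intro hx0
    exact hx (hx0 ▸ h0)
  have h2 : ∑ x ∈ Finset.univ.filter (· ≠ 0), h x = ∑ b : {x : ZMod p // x ≠ 0}, h ↑b := by
    rw [Finset.sum_subtype (p := fun x : ZMod p => x ≠ 0) _ (by simp) h]
  have h3 : ∑ b : {x : ZMod p // x ≠ 0}, h ↑b = ∑ a : (ZMod p)ˣ, h ↑a := by
    rw [← Equiv.sum_comp (unitsEquivNeZero (G₀ := ZMod p))]
    apply Finset.sum_congr rfl
    intro a _
    rfl
  rw [h1, h2, h3]

/-- The Gauss sum of the trivial character with a nontrivial additive character is `-1`. -/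
lemma aux_gauss_one {p : ℕ} [Fact p.Prime] {ψ : AddChar (ZMod p) ℂ} (hψ : ψ ≠ 1) :
    gaussSum (1 : MulChar (ZMod p) ℂ) ψ = -1 := by
  have : gaussSum (1 : MulChar (ZMod p) ℂ) ψ = ∑ x : ZMod p, (if x = 0 then 0 else ψ x) := by
    rw [gaussSum]
    apply Finset.sum_congr rfl
    intro x _
    by_cases hx : x = 0
    · simp [hx, MulChar.map_nonunit (1 : MulChar (ZMod p) ℂ) (by simp : ¬ IsUnit (0 : ZMod p))]
    · rw [MulChar.one_apply (isUnit_iff_ne_zero.mpr hx), one_mul, if_neg hx]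
  rw [this]
  have hsplit : ∀ x : ZMod p, (if x = 0 then 0 else ψ x)
      = ψ x - (if x = 0 then 1 else 0) := by
    intro x
    by_cases hx : x = 0
    · simp [hx, AddChar.map_zero_eq_one]
    · simp [hx]
  calc ∑ x : ZMod p, (if x = 0 then 0 else ψ x)
      = ∑ x : ZMod p, (ψ x - (if x = 0 then 1 else 0)) := Finset.sum_congr rfl fun x _ => hsplit x
    _ = (∑ x : ZMod p, ψ x) - ∑ x : ZMod p, (if x = 0 then (1:ℂ) else 0) :=
        Finset.sum_sub_distrib _ _
    _ = 0 - 1 := by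
        rw [AddChar.sum_eq_zero_of_ne_one hψ, Finset.sum_ite_eq' Finset.univ (0 : ZMod p)
          (fun _ => (1:ℂ))]
        simp
    _ = -1 := by ring

open ArithmeticFunction in
/-- Möbius sum identity: `∑_{d ∣ n, m ∣ d} μ(n/d) = [m = n]`. -/
lemma aux_moebius_sum {m n : ℕ} (hn : n ≠ 0) (hm : m ∣ n) :
    (∑ d ∈ n.divisors, if m ∣ d then ArithmeticFunction.moebius (n/d) else 0)
      = if m = n then (1 : ℤ) else 0 := by
  have hm0 : m ≠ 0 := fun h => hn (Nat.eq_zero_of_zero_dvd (h ▸ hm))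
  have hstep1 : (∑ d ∈ n.divisors, if m ∣ d then ArithmeticFunction.moebius (n/d) else 0)
      = ∑ d ∈ n.divisors.filter (m ∣ ·), ArithmeticFunction.moebius (n/d) :=
    (Finset.sum_filter _ _).symm
  have hstep2 : ∑ d ∈ n.divisors.filter (m ∣ ·), ArithmeticFunction.moebius (n/d)
      = ∑ e ∈ (n/m).divisors, ArithmeticFunction.moebius ((n/m)/e) := by
    apply Finset.sum_nbij' (i := fun d => d / m) (j := fun e => m * e)
    · intro d hd
      simp only [Finset.mem_filter, Nat.mem_divisors] at hd
      obtain ⟨⟨hdn, _⟩, hmd⟩ := hd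
      rw [Nat.mem_divisors]
      refine ⟨?_, fun h => hn (by rw [← Nat.div_mul_cancel hm, h, zero_mul])⟩
      obtain ⟨e, rfl⟩ := hmd
      rw [Nat.mul_div_cancel_left e (Nat.pos_of_ne_zero hm0)]
      have := hdn
      rw [← Nat.mul_div_cancel' hm] at this
      exact (mul_dvd_mul_iff_left (by exact_mod_cast hm0 : m ≠ 0)).mp this
    · intro e he
      rw [Nat.mem_divisors] at he
      simp only [Finset.mem_filter, Nat.mem_divisors]
      exact ⟨⟨(mul_dvd_mul_left m he.1).trans (by rw [Nat.mul_div_cancel' hm]), hn⟩,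
        Dvd.intro e rfl⟩
    · intro d hd
      simp only [Finset.mem_filter] at hd
      exact Nat.mul_div_cancel' hd.2
    · intro e he
      exact Nat.mul_div_cancel_left e (Nat.pos_of_ne_zero hm0)
    · intro d hd
      simp only [Finset.mem_filter] at hd
      congr 1
      rw [Nat.div_div_eq_div_mul, Nat.mul_div_cancel' hd.2]
  have hstep3 : ∑ e ∈ (n/m).divisors, ArithmeticFunction.moebius ((n/m)/e)
      = ∑ e ∈ (n/m).divisors, ArithmeticFunction.moebius e :=
    Nat.sum_div_divisors (n/m) ArithmeticFunction.moebius
  have hstep4 : ∑ e ∈ (n/m).divisors, ArithmeticFunction.moebius e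
      = if n / m = 1 then (1:ℤ) else 0 := by
    have := ArithmeticFunction.coe_mul_zeta_apply
      (f := ArithmeticFunction.moebius) (x := n / m)
    rw [ArithmeticFunction.moebius_mul_coe_zeta] at this
    rw [← this, ArithmeticFunction.one_apply]
  have hiff : (n / m = 1) = (m = n) := by
    apply propext
    constructor
    · intro h
      have := Nat.div_mul_cancel hm
      rw [h, one_mul] at this
      exact this
    · intro h
      rw [h, Nat.div_self (Nat.pos_of_ne_zero hn)]
  rw [hstep1, hstep2, hstep3, hstep4]
  exact if_congr (iff_of_eq hiff) rfl rfl

/-- A character of maximal order is injective on units (trivial only at 1). -/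
lemma aux_chi_eq_one {p : ℕ} [Fact p.Prime] {χ : MulChar (ZMod p) ℂ}
    (hχ : orderOf χ = Fintype.card (ZMod p)ˣ) {u : (ZMod p)ˣ} (hu : χ ↑u = 1) :
    u = 1 := by
  obtain ⟨g, hg⟩ := IsCyclic.exists_generator (α := (ZMod p)ˣ)
  have hog : orderOf g = Fintype.card (ZMod p)ˣ := by
    rw [orderOf_eq_card_of_forall_mem_zpowers hg, Nat.card_eq_fintype_card]
  have hord : orderOf (χ ↑g) = orderOf χ := by
    rw [orderOf_eq_orderOf_iff]
    intro k
    rw [← MulChar.pow_apply_coe]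
    exact ((MulChar.eq_iff hg (χ ^ k) 1).trans (by rw [MulChar.one_apply_coe])).symm
  obtain ⟨t, ht'⟩ := mem_powers_iff_mem_zpowers.mpr (hg u)
  have ht : g ^ t = u := ht'
  have h1 : (χ ↑g) ^ t = 1 := by
    rw [← map_pow, ← Units.val_pow_eq_pow_val, ht, hu]
  have h2 : orderOf g ∣ t := by
    rw [hog, ← hχ, ← hord]
    exact orderOf_dvd_of_pow_eq_one h1
  rw [← ht, orderOf_dvd_iff_pow_eq_one.mp h2]

/-- Character-sum expression for the indicator of `a ^ d = 1`. -/
lemma aux_indicator_pow {p : ℕ} [Fact p.Prime] {χ : MulChar (ZMod p) ℂ}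
    (hχ : orderOf χ = Fintype.card (ZMod p)ˣ) {d : ℕ} (hd : d ∣ Fintype.card (ZMod p)ˣ)
    (a : (ZMod p)ˣ) :
    ((d : ℂ) / (Fintype.card (ZMod p)ˣ : ℂ)) *
        ∑ j ∈ Finset.range (Fintype.card (ZMod p)ˣ / d), (χ ↑a) ^ (j * d)
      = if a ^ d = 1 then 1 else 0 := by
  set n := Fintype.card (ZMod p)ˣ with hn
  have hn0 : n ≠ 0 := Fintype.card_ne_zero
  have hd0 : d ≠ 0 := fun h => hn0 (Nat.eq_zero_of_zero_dvd (h ▸ hd))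
  set m := n / d with hm
  have hdm : d * m = n := Nat.mul_div_cancel' hd
  set z : ℂ := (χ ↑a) ^ d with hz
  have hsum : ∑ j ∈ Finset.range m, (χ ↑a) ^ (j * d) = ∑ j ∈ Finset.range m, z ^ j :=
    Finset.sum_congr rfl fun j _ => by rw [hz, ← pow_mul, mul_comm]
  have hzval : z = χ ↑(a ^ d) := by
    rw [hz, ← map_pow, Units.val_pow_eq_pow_val]
  by_cases h : a ^ d = 1
  · have hz1 : z = 1 := by rw [hzval, h, Units.val_one, map_one]
    rw [hsum, hz1]
    simp only [one_pow, Finset.sum_const, Finset.card_range, nsmul_eq_mul, mul_one, if_pos h]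
    rw [div_mul_eq_mul_div, ← Nat.cast_mul, hdm]
    exact div_self (by exact_mod_cast hn0)
  · have hz1 : z ≠ 1 := fun hz1 => h (aux_chi_eq_one hχ (hzval ▸ hz1))
    have hzm : z ^ m = 1 := by
      rw [hz, ← pow_mul, hdm, ← map_pow, ← Units.val_pow_eq_pow_val, hn, pow_card_eq_one,
        Units.val_one, map_one]
    rw [hsum, geom_sum_eq hz1, if_neg h, hzm]
    simp

open ArithmeticFunction in
/-- Central estimate: the exponential sum over primitive roots, as a sum over units. -/
lemma aux_main_bound {p : ℕ} [Fact p.Prime] {ψ : AddChar (ZMod p) ℂ} (hψ : ψ.IsPrimitive) :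
    ‖∑ a : (ZMod p)ˣ, if orderOf a = Fintype.card (ZMod p)ˣ then ψ ↑a else 0‖
      ≤ (((Fintype.card (ZMod p)ˣ).divisors.card : ℝ)) * Real.sqrt p := by
  have hp2 : 2 ≤ p := (Fact.out : p.Prime).two_le
  set n := Fintype.card (ZMod p)ˣ with hn
  have hn0 : n ≠ 0 := Fintype.card_ne_zero
  obtain ⟨χ, hχ⟩ := MulChar.exists_mulChar_orderOf_eq_card_units (F := ZMod p)
    (Complex.isPrimitiveRoot_exp n hn0)
  have hψ1 : ψ ≠ 1 := by
    intro h
    exact hψ one_ne_zero (by rw [AddChar.mulShift_one, h])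
  set Fd : ℕ → ℂ := fun d => ∑ a : (ZMod p)ˣ, (if a ^ d = 1 then 1 else 0) * ψ ↑a with hFd
  -- Step A : Möbius decomposition
  have stepA : (∑ a : (ZMod p)ˣ, if orderOf a = n then ψ ↑a else 0)
      = ∑ d ∈ n.divisors, ((moebius (n/d) : ℤ) : ℂ) * Fd d := by
    have h1 : ∀ a : (ZMod p)ˣ, (if orderOf a = n then ψ ↑a else 0)
        = ∑ d ∈ n.divisors, ((moebius (n/d) : ℤ) : ℂ) *
            ((if a ^ d = 1 then 1 else 0) * ψ ↑a) := by
      intro a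
      have horder : ∀ d : ℕ, (a ^ d = 1) = (orderOf a ∣ d) := by
        intro d; rw [eq_iff_iff, orderOf_dvd_iff_pow_eq_one]
      have hcast : ∑ d ∈ n.divisors, ((moebius (n/d) : ℤ) : ℂ) * (if a ^ d = 1 then 1 else 0)
          = (((∑ d ∈ n.divisors, if orderOf a ∣ d then moebius (n/d) else 0 : ℤ)) : ℂ) := by
        push_cast
        apply Finset.sum_congr rfl
        intro d _
        by_cases h : a ^ d = 1
        · simp [h, orderOf_dvd_iff_pow_eq_one.mpr h]
        · have h' : ¬ orderOf a ∣ d := fun hh => h (orderOf_dvd_iff_pow_eq_one.mp hh)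
          simp [h, h']
      calc (if orderOf a = n then ψ ↑a else 0)
          = (if orderOf a = n then (1:ℂ) else 0) * ψ ↑a := by
            by_cases h : orderOf a = n <;> simp [h]
        _ = (∑ d ∈ n.divisors, ((moebius (n/d) : ℤ) : ℂ) * (if a ^ d = 1 then 1 else 0))
              * ψ ↑a := by
            rw [hcast, aux_moebius_sum hn0 (hn ▸ orderOf_dvd_card)]
            by_cases h : orderOf a = n <;> simp [h]
        _ = _ := by rw [Finset.sum_mul]; exact Finset.sum_congr rfl fun d _ => by ring
    rw [Finset.sum_congr rfl fun a _ => h1 a, Finset.sum_comm]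
    exact Finset.sum_congr rfl fun d _ => by rw [Finset.mul_sum]
  -- Step B : each Fd is at most √p
  have stepB : ∀ d ∈ n.divisors, ‖Fd d‖ ≤ Real.sqrt p := by
    intro d hd
    rw [Nat.mem_divisors] at hd
    obtain ⟨hdn, -⟩ := hd
    have hd0 : d ≠ 0 := fun h => hn0 (Nat.eq_zero_of_zero_dvd (h ▸ hdn))
    set m := n / d with hm
    have hdm : d * m = n := Nat.mul_div_cancel' hdn
    have hm0 : m ≠ 0 := fun h => hn0 (by rw [← hdm, h, mul_zero])
    have hexp : Fd d = ((d : ℂ) / (n : ℂ)) *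
        ∑ j ∈ Finset.range m, gaussSum (χ ^ (j * d)) ψ := by
      have h2 : ∀ j, gaussSum (χ ^ (j * d)) ψ = ∑ a : (ZMod p)ˣ, (χ ↑a) ^ (j * d) * ψ ↑a := by
        intro j
        rw [gaussSum, aux_sum_units (fun x => (χ ^ (j * d)) x * ψ x)
          (by show (χ ^ (j * d)) 0 * ψ 0 = 0
              rw [MulChar.map_nonunit _ not_isUnit_zero, zero_mul])]
        exact Finset.sum_congr rfl fun a _ => by rw [MulChar.pow_apply_coe]
      simp only [h2]
      calc ∑ a : (ZMod p)ˣ, (if a ^ d = 1 then 1 else 0) * ψ ↑a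
          = ∑ a : (ZMod p)ˣ, ∑ j ∈ Finset.range m, ((d:ℂ)/(n:ℂ)) * (χ ↑a ^ (j * d) * ψ ↑a) := by
            apply Finset.sum_congr rfl
            intro a _
            rw [← aux_indicator_pow hχ hdn a, Finset.mul_sum, Finset.sum_mul]
            exact Finset.sum_congr rfl fun j _ => by ring
        _ = ∑ j ∈ Finset.range m, ((d:ℂ)/(n:ℂ)) * ∑ a : (ZMod p)ˣ, χ ↑a ^ (j * d) * ψ ↑a := by
            rw [Finset.sum_comm]
            exact Finset.sum_congr rfl fun j _ => by rw [← Finset.mul_sum]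
        _ = _ := by rw [← Finset.mul_sum]
    -- bound each Gauss sum
    have hterm : ∀ j ∈ Finset.range m, ‖gaussSum (χ ^ (j * d)) ψ‖ ≤ Real.sqrt p := by
      intro j hj
      rw [Finset.mem_range] at hj
      have hsqrt1 : (1:ℝ) ≤ Real.sqrt p := by
        rw [show (1:ℝ) = Real.sqrt 1 by simp]
        exact Real.sqrt_le_sqrt (by exact_mod_cast le_trans one_le_two hp2)
      by_cases hj0 : j = 0
      · rw [hj0, zero_mul, pow_zero, aux_gauss_one hψ1]
        simpa using hsqrt1
      · have hne : χ ^ (j * d) ≠ 1 := by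
          intro h
          have : orderOf χ ∣ j * d := orderOf_dvd_of_pow_eq_one h
          rw [hχ, ← hn] at this
          have hlt : j * d < n := by
            calc j * d < m * d :=
                  (Nat.mul_lt_mul_right (Nat.pos_of_ne_zero hd0)).mpr hj
              _ = n := by rw [mul_comm]; exact hdm
          have hpos : 0 < j * d := Nat.mul_pos (Nat.pos_of_ne_zero hj0) (Nat.pos_of_ne_zero hd0)
          exact absurd (Nat.le_of_dvd hpos this) (not_le.mpr hlt)
        rw [aux_gauss_abs hne hψ]
    rw [hexp]
    rw [norm_mul]
    have habs_dn : ‖(d:ℂ)/(n:ℂ)‖ = (d:ℝ)/(n:ℝ) := by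
      rw [norm_div, Complex.norm_natCast, Complex.norm_natCast]
    rw [habs_dn]
    calc (d:ℝ)/(n:ℝ) * ‖∑ j ∈ Finset.range m, gaussSum (χ ^ (j * d)) ψ‖
        ≤ (d:ℝ)/(n:ℝ) * ∑ j ∈ Finset.range m, ‖gaussSum (χ ^ (j * d)) ψ‖ := by
          apply mul_le_mul_of_nonneg_left _ (by positivity)
          exact (norm_sum_le _ _)
      _ ≤ (d:ℝ)/(n:ℝ) * (m * Real.sqrt p) := by
          apply mul_le_mul_of_nonneg_left _ (by positivity)
          calc ∑ j ∈ Finset.range m, ‖gaussSum (χ ^ (j * d)) ψ‖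
              ≤ ∑ _j ∈ Finset.range m, Real.sqrt p := Finset.sum_le_sum hterm
            _ = m * Real.sqrt p := by rw [Finset.sum_const, Finset.card_range, nsmul_eq_mul]
      _ = Real.sqrt p := by
          have : (d:ℝ) * m = n := by exact_mod_cast hdm
          field_simp
          exact this
  -- combine
  have hmu : ∀ k : ℕ, ‖((moebius k : ℤ) : ℂ)‖ ≤ 1 := by
    intro k
    by_cases h : Squarefree k
    · rw [Complex.norm_intCast, ← Int.cast_abs, abs_moebius_eq_one_of_squarefree h]
      norm_num
    · rw [moebius_eq_zero_of_not_squarefree h]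
      simp
  calc ‖∑ a : (ZMod p)ˣ, if orderOf a = n then ψ ↑a else 0‖
      = ‖∑ d ∈ n.divisors, ((moebius (n/d) : ℤ) : ℂ) * Fd d‖ := by rw [stepA]
    _ ≤ ∑ d ∈ n.divisors, ‖((moebius (n/d) : ℤ) : ℂ) * Fd d‖ :=
        norm_sum_le _ _
    _ ≤ ∑ _d ∈ n.divisors, Real.sqrt p := by
        apply Finset.sum_le_sum
        intro d hd
        rw [norm_mul]
        calc ‖((moebius (n/d) : ℤ) : ℂ)‖ * ‖Fd d‖
            ≤ 1 * Real.sqrt p := by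
              apply mul_le_mul (hmu _) (stepB d hd) (norm_nonneg _) (by norm_num)
          _ = Real.sqrt p := one_mul _
    _ = (n.divisors.card : ℝ) * Real.sqrt p := by
        rw [Finset.sum_const, nsmul_eq_mul]

/-- For every `ε > 0` there is `p₀` such that for every prime
`p ≥ p₀` and every integer `s` with `p ∤ s`, the exponential sum over the primitive
roots mod `p` satisfies `|∑_{g ∈ P_p} e^{2πi s g / p}| ≤ p^{1/2 + ε}`; in particular
the normalized Weyl sums satisfy `(1/p)|∑| ≤ p^{ε - 1/2}`, so they tend to `0` and
the primitive roots are equidistributed in `[1, p - 1]`. -/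
theorem primitive_roots_equidistributed (ε : ℝ) (hε : 0 < ε) :
    ∃ p₀ : ℕ, ∀ p : ℕ, p.Prime → p₀ ≤ p → ∀ s : ℤ, ¬ (p : ℤ) ∣ s →
      ‖∑ g ∈ (Finset.Icc 1 (p - 1)).filter
            (fun g : ℕ => orderOf ((g : ZMod p)) = p - 1),
          Complex.exp (2 * Real.pi * Complex.I * (s : ℂ) * (g : ℂ) / (p : ℂ))‖ ≤
        (p : ℝ) ^ ((1 : ℝ) / 2 + ε) ∧
      (1 / (p : ℝ)) * ‖∑ g ∈ (Finset.Icc 1 (p - 1)).filter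
            (fun g : ℕ => orderOf ((g : ZMod p)) = p - 1),
          Complex.exp (2 * Real.pi * Complex.I * (s : ℂ) * (g : ℂ) / (p : ℂ))‖ ≤
        (p : ℝ) ^ (ε - 1 / 2) := by
  obtain ⟨N, hN1, hN⟩ := aux_card_divisors_le_rpow ε hε
  refine ⟨N + 2, ?_⟩
  intro p hp hpN s hs
  haveI : Fact p.Prime := ⟨hp⟩
  have hp2 : 2 ≤ p := hp.two_le
  have hp1 : 1 ≤ p - 1 := by omega
  have hp0 : (0:ℝ) < (p:ℝ) := by positivity
  set b : ZMod p := (s : ZMod p) with hb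
  have hb0 : b ≠ 0 := by
    rw [hb, Ne, ZMod.intCast_zmod_eq_zero_iff_dvd]
    exact hs
  set ψ : AddChar (ZMod p) ℂ := AddChar.mulShift ZMod.stdAddChar b with hψdef
  have hψ1 : ψ ≠ 1 := ZMod.isPrimitive_stdAddChar p hb0
  have hψ : ψ.IsPrimitive := AddChar.IsPrimitive.of_ne_one hψ1
  set f : ZMod p → ℂ := fun x => if orderOf x = p - 1 then ψ x else 0 with hf
  have hf0 : f 0 = 0 := by
    rw [hf]
    simp only []
    rw [if_neg]
    intro h
    have h1 : (0 : ZMod p) ^ (p - 1) = 1 := h ▸ pow_orderOf_eq_one (0 : ZMod p)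
    rw [zero_pow (by omega : p - 1 ≠ 0)] at h1
    exact zero_ne_one h1
  -- identify the sum in the statement with the sum over units
  have hsum : (∑ g ∈ (Finset.Icc 1 (p - 1)).filter
        (fun g : ℕ => orderOf ((g : ZMod p)) = p - 1),
      Complex.exp (2 * Real.pi * Complex.I * (s : ℂ) * (g : ℂ) / (p : ℂ)))
      = ∑ a : (ZMod p)ˣ, if orderOf a = Fintype.card (ZMod p)ˣ then ψ ↑a else 0 := by
    have hterm : ∀ g : ℕ, ψ ((g : ZMod p))
        = Complex.exp (2 * Real.pi * Complex.I * (s : ℂ) * (g : ℂ) / (p : ℂ)) := by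
      intro g
      rw [hψdef, AddChar.mulShift_apply, hb]
      have : (s : ZMod p) * (g : ZMod p) = ((s * g : ℤ) : ZMod p) := by push_cast; ring
      rw [this, ZMod.stdAddChar_coe]
      push_cast
      ring_nf
    have step1 : (∑ g ∈ (Finset.Icc 1 (p - 1)).filter
          (fun g : ℕ => orderOf ((g : ZMod p)) = p - 1),
        Complex.exp (2 * Real.pi * Complex.I * (s : ℂ) * (g : ℂ) / (p : ℂ)))
        = ∑ g ∈ Finset.Icc 1 (p - 1), f ((g : ZMod p)) := by
      rw [Finset.sum_filter]
      apply Finset.sum_congr rfl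
      intro g _
      by_cases h : orderOf ((g : ZMod p)) = p - 1
      · rw [hf]; simp only [h, if_true]; exact (hterm g).symm
      · rw [hf]; simp only [h, if_false]
    have step2 : ∑ g ∈ Finset.Icc 1 (p - 1), f ((g : ZMod p))
        = ∑ x ∈ Finset.univ.filter (fun x : ZMod p => x ≠ 0), f x := by
      apply Finset.sum_nbij' (i := fun g : ℕ => (g : ZMod p)) (j := fun x : ZMod p => x.val)
      · intro g hg
        rw [Finset.mem_Icc] at hg
        simp only [Finset.mem_filter, Finset.mem_univ, true_and]
        intro h
        rw [ZMod.natCast_eq_zero_iff] at h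
        have := Nat.le_of_dvd (by omega) h
        omega
      · intro x hx
        simp only [Finset.mem_filter, Finset.mem_univ, true_and] at hx
        rw [Finset.mem_Icc]
        have h1 : x.val ≠ 0 := fun h => hx ((ZMod.val_eq_zero x).mp h)
        have h2 : x.val < p := ZMod.val_lt x
        omega
      · intro g hg
        rw [Finset.mem_Icc] at hg
        exact ZMod.val_cast_of_lt (by omega)
      · intro x _
        exact ZMod.natCast_zmod_val x
      · intro g _
        rfl
    have step3 : ∑ x ∈ Finset.univ.filter (fun x : ZMod p => x ≠ 0), f x
        = ∑ x : ZMod p, f x := by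
      apply Finset.sum_filter_of_ne
      intro x _ hfx
      intro hx0
      exact hfx (hx0 ▸ hf0)
    have step4 : ∑ x : ZMod p, f x
        = ∑ a : (ZMod p)ˣ, if orderOf a = Fintype.card (ZMod p)ˣ then ψ ↑a else 0 := by
      rw [aux_sum_units f hf0]
      apply Finset.sum_congr rfl
      intro a _
      rw [hf]
      simp only [orderOf_units]
      rw [ZMod.card_units p]
    rw [step1, step2, step3, step4]
  rw [hsum]
  simp only [ZMod.card_units p]
  -- apply the central bound
  have hbound := aux_main_bound hψ
  rw [ZMod.card_units p] at hbound
  have htau : ((p-1 : ℕ).divisors.card : ℝ) ≤ ((p-1 : ℕ) : ℝ) ^ ε := hN (p-1) (by omega)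
  have hcast : ((p-1 : ℕ) : ℝ) ≤ (p : ℝ) := by
    have := Nat.sub_le p 1
    exact_mod_cast this
  have hmain : ‖∑ a : (ZMod p)ˣ, if orderOf a = p - 1 then ψ ↑a else 0‖
      ≤ (p : ℝ) ^ ((1:ℝ)/2 + ε) := by
    calc ‖∑ a : (ZMod p)ˣ, if orderOf a = p - 1 then ψ ↑a else 0‖
        ≤ ((p-1 : ℕ).divisors.card : ℝ) * Real.sqrt p := hbound
      _ ≤ (p : ℝ) ^ ε * (p : ℝ) ^ ((1:ℝ)/2) := by
          apply mul_le_mul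
          · calc ((p-1 : ℕ).divisors.card : ℝ) ≤ ((p-1 : ℕ) : ℝ) ^ ε := htau
              _ ≤ (p : ℝ) ^ ε := Real.rpow_le_rpow (by positivity) hcast (le_of_lt hε)
          · rw [Real.sqrt_eq_rpow]
          · exact Real.sqrt_nonneg _
          · positivity
      _ = (p : ℝ) ^ ((1:ℝ)/2 + ε) := by
          rw [← Real.rpow_add hp0]
          ring_nf
  constructor
  · exact hmain
  · calc (1 / (p:ℝ)) * ‖∑ a : (ZMod p)ˣ, if orderOf a = p - 1 then ψ ↑a else 0‖
        ≤ (1 / (p:ℝ)) * (p : ℝ) ^ ((1:ℝ)/2 + ε) := by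
          apply mul_le_mul_of_nonneg_left hmain (by positivity)
      _ = (p : ℝ) ^ (ε - 1/2) := by
          rw [one_div, ← Real.rpow_neg_one (p:ℝ), ← Real.rpow_add hp0]
          ring_nf
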